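/- Let G be a graph, C a longest cycle of G with a fixed orientation, and x a vertex not on C. If y, z ∈ N_G(x) ∩ V(C) with y ≠ z, then there is no path in G from y⁺ to z⁺ whose internal vertices all lie outside C; in particular y⁺z⁺ ∉ E(G). -/

import Mathlib

open SimpleGraph

private lemma aux_dart_of_lt {V : Type*} {G : SimpleGraph V} {u v : V} (W : G.Walk u v) :
    ∀ k, k < W.length → ∃ d ∈ W.darts, d.fst = W.getVert k ∧ d.snd = W.getVert (k + 1) := by
  induction W with
  | nil => intro k hk; simp at hk
  | cons h p ih =>
    intro k hk
    cases k with
    | zero =>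
      exact ⟨⟨(_, _), h⟩, by simp [Walk.darts_cons], rfl, by
        simp [Walk.getVert_cons_succ, Walk.getVert_zero]⟩
    | succ k =>
      obtain ⟨d, hd, h1, h2⟩ := ih k (by simpa [Walk.length_cons, Nat.succ_lt_succ_iff] using hk)
      exact ⟨d, by simp [Walk.darts_cons, hd],
        by simpa [Walk.getVert_cons_succ] using h1,
        by simpa [Walk.getVert_cons_succ] using h2⟩

private lemma aux_lt_of_dart {V : Type*} {G : SimpleGraph V} {u v : V} (W : G.Walk u v) :
    ∀ d ∈ W.darts, ∃ k, k < W.length ∧ W.getVert k = d.fst ∧ W.getVert (k + 1) = d.snd := by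
  induction W with
  | nil => simp
  | cons h p ih =>
    intro d hd
    rw [Walk.darts_cons, List.mem_cons] at hd
    rcases hd with rfl | hd
    · exact ⟨0, by simp, rfl, by simp [Walk.getVert_cons_succ, Walk.getVert_zero]⟩
    · obtain ⟨k, hk, h1, h2⟩ := ih d hd
      exact ⟨k + 1, by simp [hk], by simpa [Walk.getVert_cons_succ] using h1,
        by simpa [Walk.getVert_cons_succ] using h2⟩

private lemma end_mem_tail_support {V : Type*} {G : SimpleGraph V} {u v : V}
    {p : G.Walk u v} (h : ¬ p.Nil) : v ∈ p.support.tail := by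
  rw [← Walk.support_tail_of_not_nil p h]
  exact Walk.end_mem_support _

private lemma main_lemma {V : Type*} [Fintype V] (G : SimpleGraph V)
    {y : V} (D : G.Walk y y) (hD : D.IsCycle)
    (hlongest : ∀ (w : V) (C' : G.Walk w w), C'.IsCycle → C'.length ≤ D.length)
    (succ : V → V)
    (hsucc : ∀ i < D.length, succ (D.getVert i) = D.getVert (i + 1))
    (x : V) (hx : x ∉ D.support)
    (z : V) (hy : G.Adj x y) (hz : G.Adj x z)
    (hzD : z ∈ D.support) (hyz : y ≠ z)
    (P : G.Walk (succ y) (succ z)) (hP : P.IsPath)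
    (hPint : ∀ w ∈ P.support.tail.dropLast, w ∉ D.support) : False := by
  classical
  have hn3 : 3 ≤ D.length := hD.three_le_length
  have hDnil : ¬ D.Nil := by rw [Walk.not_nil_iff_lt_length]; omega
  have hsy : succ y = D.getVert 1 := by simpa using hsucc 0 (by omega)
  set E : G.Walk (succ y) y := D.tail.copy hsy.symm rfl with hEdef
  have hEsup : E.support = D.support.tail := by
    simp [hEdef, Walk.support_tail_of_not_nil D hDnil]
  have hEnodup : E.support.Nodup := by rw [hEsup]; exact hD.support_nodup
  have hEpath : E.IsPath := Walk.IsPath.mk' hEnodup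
  have hElen : E.length + 1 = D.length := by
    simpa [hEdef] using Walk.length_tail_add_one hDnil
  have hEgetVert : ∀ k, E.getVert k = D.getVert (k + 1) := by
    intro k; simp [hEdef, Walk.getVert_tail _]
  have hEsubD : ∀ w ∈ E.support, w ∈ D.support := by
    intro w hw; rw [hEsup] at hw; exact List.mem_of_mem_tail hw
  have hzE : z ∈ E.support := by
    rw [hEsup]
    rcases List.mem_cons.mp (D.support_eq_cons ▸ hzD) with h | h
    · exact absurd h.symm hyz
    · exact h
  set M : G.Walk (succ y) z := E.takeUntil z hzE with hMdef
  set R : G.Walk z y := E.dropUntil z hzE with hRdef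
  have hspec : M.append R = E := E.take_spec hzE
  have hMR_sup : M.support ++ R.support.tail = E.support := by
    rw [← hspec, Walk.support_append]
  have hnd : (M.support ++ R.support.tail).Nodup := hMR_sup ▸ hEnodup
  obtain ⟨hMnodup, hRtnodup, hdisj⟩ := List.nodup_append'.mp hnd
  have hRne : ¬ R.Nil := Walk.not_nil_of_ne (fun h => hyz h.symm)
  have hRlen : 1 ≤ R.length := by
    rw [Walk.not_nil_iff_lt_length] at hRne; omega
  have hlenMR : M.length + R.length = E.length := by
    have := congrArg Walk.length hspec
    simpa [Walk.length_append] using this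
  have h1 : E.getVert M.length = z := by
    rw [← hspec, Walk.getVert_append]
    simp
  have h2 : E.getVert (M.length + 1) = R.getVert 1 := by
    rw [← hspec, Walk.getVert_append, if_neg (by omega)]
    congr 1
    omega
  have hMlt : M.length + 1 < D.length := by omega
  have hsz : succ z = R.getVert 1 := by
    have h := hsucc (M.length + 1) hMlt
    rw [← hEgetVert M.length, h1] at h
    rw [h, ← h2, hEgetVert]
  set N : G.Walk (succ z) y := R.tail.copy hsz.symm rfl with hNdef
  have hNsup : N.support = R.support.tail := by
    simp [hNdef, Walk.support_tail_of_not_nil R hRne]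
  have hNlen : N.length + 1 = R.length := by
    simpa [hNdef] using Walk.length_tail_add_one hRne
  have hNnodup : N.support.Nodup := hNsup ▸ hRtnodup
  have hszR : succ z ∈ R.support.tail := hNsup ▸ N.start_mem_support
  have hszD : succ z ∈ D.support :=
    hEsubD _ (hMR_sup ▸ (List.mem_append.mpr (Or.inr hszR)))
  have hsyD : succ y ∈ D.support := hEsubD _ E.start_mem_support
  have hMsubD : ∀ w ∈ M.support, w ∈ D.support := by
    intro w hw
    exact hEsubD _ (hMR_sup ▸ (List.mem_append.mpr (Or.inl hw)))
  have hNtsubD : ∀ w ∈ N.support.tail, w ∈ D.support := by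
    intro w hw
    have : w ∈ N.support := List.mem_of_mem_tail hw
    rw [hNsup] at this
    exact hEsubD _ (hMR_sup ▸ (List.mem_append.mpr (Or.inr this)))
  have hszM : succ z ∉ M.support := fun h => hdisj h hszR
  have hPtail : ∀ w ∈ P.support.tail, w ∈ D.support → w = succ z := by
    intro w hw hwD
    have hne : P.support.tail ≠ [] := List.ne_nil_of_mem hw
    have hlast : P.support.tail.getLast hne = succ z := by
      rw [List.getLast_tail]
      exact P.getLast_support
    have hdec := List.dropLast_concat_getLast hne
    rw [hlast] at hdec
    rcases List.mem_append.mp (hdec ▸ hw) with h | h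
    · exact absurd hwD (hPint w h)
    · simpa using h
  have hadjDy : G.Adj y (succ y) := by
    rw [hsy]
    have := D.adj_getVert_succ (show 0 < D.length by omega)
    simpa using this
  by_cases hxP : x ∈ P.support
  · -- Case B: x lies on P; use C plus initial segment of P up to x
    set P1 : G.Walk (succ y) x := P.takeUntil x hxP with hP1def
    have hP1 : P1.IsPath := hP.takeUntil hxP
    have hP1sub : P1.support ⊆ P.support := P.support_takeUntil_subset hxP
    have hxsz : x ≠ succ z := fun h => hx (h ▸ hszD)
    have hszP1 : succ z ∉ P1.support := by
      intro h
      have hspecP := P.take_spec hxP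
      have hnodupP := hP.support_nodup
      rw [← hspecP, Walk.support_append] at hnodupP
      have h2 : succ z ∈ (P.dropUntil x hxP).support.tail := by
        have hend : succ z ∈ (P.dropUntil x hxP).support := Walk.end_mem_support _
        rcases List.mem_cons.mp ((P.dropUntil x hxP).support_eq_cons ▸ hend) with h' | h'
        · exact absurd h'.symm hxsz
        · exact h'
      exact (List.nodup_append'.mp hnodupP).2.2 h h2
    have hP1tail : ∀ w ∈ P1.support.tail, w ∉ D.support := by
      intro w hw hwD
      by_cases hwx : w = x
      · exact hx (hwx ▸ hwD)
      · have hwP : w ∈ P.support.tail := by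
          have hwPs : w ∈ P.support := hP1sub (List.mem_of_mem_tail hw)
          rcases List.mem_cons.mp (P.support_eq_cons ▸ hwPs) with h' | h'
          · exfalso
            have := hP1.support_nodup
            rw [P1.support_eq_cons] at this
            exact (List.nodup_cons.mp this).1 (h' ▸ hw)
          · exact h'
        have := hPtail w hwP hwD
        exact hszP1 (this ▸ (List.mem_of_mem_tail hw))
    set Q : G.Walk y x := E.reverse.append P1 with hQdef
    have hQsup : Q.support = E.support.reverse ++ P1.support.tail := by
      rw [hQdef, Walk.support_append, Walk.support_reverse]
    have hQnodup : Q.support.Nodup := by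
      rw [hQsup, List.nodup_append']
      refine ⟨List.nodup_reverse.mpr hEnodup, hP1.support_nodup.tail, ?_⟩
      intro w hw1 hw2
      exact hP1tail w hw2 (hEsubD w (List.mem_reverse.mp hw1))
    have hQpath : Q.IsPath := Walk.IsPath.mk' hQnodup
    have hedge : s(x, y) ∉ Q.edges := by
      rw [hQdef, Walk.edges_append, List.mem_append]
      rintro (h | h)
      · have := Walk.fst_mem_support_of_mem_edges _ h
        rw [Walk.support_reverse, List.mem_reverse] at this
        exact hx (hEsubD x this)
      · have hyP1 : y ∈ P1.support := Walk.snd_mem_support_of_mem_edges _ h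
        rcases List.mem_cons.mp (P1.support_eq_cons ▸ hyP1) with h' | h'
        · exact hadjDy.ne h'
        · exact hP1tail y h' D.start_mem_support
    have hcyc : (Walk.cons hy Q).IsCycle := by
      rw [Walk.cons_isCycle_iff]; exact ⟨hQpath, hedge⟩
    have hle := hlongest x _ hcyc
    have hP1nil : ¬ P1.Nil := Walk.not_nil_of_ne (fun h => hx (h ▸ hsyD))
    have hP1len : 0 < P1.length := Walk.not_nil_iff_lt_length.mp hP1nil
    rw [Walk.length_cons, hQdef, Walk.length_append, Walk.length_reverse] at hle
    omega
  · -- Case A: x not on P; exchange argument producing a longer cycle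
    have hsysz : succ y ≠ succ z := fun h => hszM (h ▸ M.start_mem_support)
    have hPnil : ¬ P.Nil := Walk.not_nil_of_ne hsysz
    have hPlen : 0 < P.length := Walk.not_nil_iff_lt_length.mp hPnil
    set tailW : G.Walk y x := Walk.cons hy.symm Walk.nil with htWdef
    set Q : G.Walk z x := M.reverse.append (P.append (N.append tailW)) with hQdef
    have hQsup : Q.support =
        M.support.reverse ++ (P.support.tail ++ (N.support.tail ++ [x])) := by
      rw [hQdef, Walk.support_append, Walk.support_reverse, Walk.tail_support_append,
        Walk.tail_support_append]
      simp [htWdef]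
    have hszNt : succ z ∉ N.support.tail := by
      have := hNnodup
      rw [N.support_eq_cons] at this
      exact (List.nodup_cons.mp this).1
    have hQnodup : Q.support.Nodup := by
      rw [hQsup, List.nodup_append', List.nodup_append', List.nodup_append']
      refine ⟨List.nodup_reverse.mpr hMnodup,
        ⟨hP.support_nodup.tail, ⟨hNnodup.tail, List.nodup_singleton x, ?_⟩, ?_⟩, ?_⟩
      · -- N.support.tail disjoint [x]
        intro w hw1 hw2
        rw [List.mem_singleton] at hw2
        exact hx (hw2 ▸ hNtsubD w hw1)
      · -- P.support.tail disjoint (N.support.tail ++ [x])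
        intro w hw1 hw2
        rcases List.mem_append.mp hw2 with h' | h'
        · have hwD := hNtsubD w h'
          have := hPtail w hw1 hwD
          exact hszNt (this ▸ h')
        · rw [List.mem_singleton] at h'
          exact hxP (h' ▸ List.mem_of_mem_tail hw1)
      · -- M.support.reverse disjoint rest
        intro w hw1 hw2
        rw [List.mem_reverse] at hw1
        rcases List.mem_append.mp hw2 with h' | h'
        · have := hPtail w h' (hMsubD w hw1)
          exact hszM (this ▸ hw1)
        · rcases List.mem_append.mp h' with h'' | h''
          · have : w ∈ N.support := List.mem_of_mem_tail h''
            rw [hNsup] at this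
            exact hdisj hw1 this
          · rw [List.mem_singleton] at h''
            exact hx (h'' ▸ hMsubD w hw1)
    have hQpath : Q.IsPath := Walk.IsPath.mk' hQnodup
    have hedge : s(x, z) ∉ Q.edges := by
      rw [hQdef, Walk.edges_append, Walk.edges_append, Walk.edges_append]
      simp only [List.mem_append]
      rintro (h | h | h | h)
      · have := Walk.fst_mem_support_of_mem_edges _ h
        rw [Walk.support_reverse, List.mem_reverse] at this
        exact hx (hMsubD x this)
      · exact hxP (Walk.fst_mem_support_of_mem_edges _ h)
      · have := Walk.fst_mem_support_of_mem_edges _ h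
        rw [hNsup] at this
        exact hx (hEsubD x (hMR_sup ▸ (List.mem_append.mpr (Or.inr this))))
      · have : s(x, z) ∈ tailW.edges := h
        rw [htWdef] at this
        simp only [Walk.edges_cons, Walk.edges_nil, List.mem_singleton] at this
        rw [Sym2.eq_iff] at this
        rcases this with ⟨h1, h2⟩ | ⟨h1, h2⟩
        · exact hx (by rw [h1]; exact D.start_mem_support)
        · exact hyz h2.symm
    have hcyc : (Walk.cons hz Q).IsCycle := by
      rw [Walk.cons_isCycle_iff]
      exact ⟨hQpath, hedge⟩
    have hle := hlongest x _ hcyc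
    rw [Walk.length_cons, hQdef, Walk.length_append, Walk.length_append, Walk.length_append,
      Walk.length_reverse] at hle
    have : tailW.length = 1 := by simp [htWdef]
    omega

/-- Let `C` be a longest cycle with successor function `succ`
(the forward orientation), and `x ∉ V(C)`. If `y, z` are distinct
neighbors of `x` on `C`, then there is no path from `y⁺` to `z⁺`
internally disjoint from `C`; in particular `y⁺z⁺ ∉ E(G)`. -/
theorem stmt_4 {V : Type*} [Fintype V] (G : SimpleGraph V)
    {v : V} (C : G.Walk v v) (hC : C.IsCycle)
    (hlongest : ∀ (w : V) (C' : G.Walk w w), C'.IsCycle → C'.length ≤ C.length)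
    (succ : V → V)
    (hsucc : ∀ i < C.length, succ (C.getVert i) = C.getVert (i + 1))
    (x : V) (hx : x ∉ C.support)
    (y z : V) (hy : G.Adj x y) (hz : G.Adj x z)
    (hyC : y ∈ C.support) (hzC : z ∈ C.support) (hyz : y ≠ z) :
    (¬ ∃ P : G.Walk (succ y) (succ z), P.IsPath ∧
        ∀ w ∈ P.support.tail.dropLast, w ∉ C.support) ∧
      ¬ G.Adj (succ y) (succ z) := by
  classical
  have hCnil : ¬ C.Nil := hC.not_nil
  set D : G.Walk y y := C.rotate y hyC with hDdef
  have hD : D.IsCycle := hC.rotate hyC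
  have hDlen : D.length = C.length := by
    rw [hDdef, Walk.rotate, Walk.length_append, Nat.add_comm, ← Walk.length_append,
      C.take_spec hyC]
  have hDsubC : ∀ w ∈ D.support, w ∈ C.support := by
    intro w hw
    rcases List.mem_cons.mp (D.support_eq_cons ▸ hw) with h | h
    · exact h ▸ hyC
    · exact List.mem_of_mem_tail (((C.support_rotate y hyC).mem_iff).mp h)
  have hmain : ¬ ∃ P : G.Walk (succ y) (succ z), P.IsPath ∧
      ∀ w ∈ P.support.tail.dropLast, w ∉ C.support := by
    rintro ⟨P, hP, hPint⟩
    have hlongest' : ∀ (w : V) (C' : G.Walk w w), C'.IsCycle → C'.length ≤ D.length := by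
      intro w C' hC'
      rw [hDlen]
      exact hlongest w C' hC'
    have hsucc' : ∀ i < D.length, succ (D.getVert i) = D.getVert (i + 1) := by
      intro k hk
      obtain ⟨d, hd, h1, h2⟩ := aux_dart_of_lt D k hk
      have hdC : d ∈ C.darts := ((C.rotate_darts y hyC).perm.mem_iff).mp hd
      obtain ⟨m, hm, g1, g2⟩ := aux_lt_of_dart C d hdC
      rw [← h1, ← h2, ← g1, ← g2]
      exact hsucc m hm
    have hx' : x ∉ D.support := fun h => hx (hDsubC x h)
    have hz' : z ∈ D.support := by
      rw [D.support_eq_cons]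
      refine List.mem_cons.mpr (Or.inr ?_)
      rw [((C.support_rotate y hyC).mem_iff)]
      rcases List.mem_cons.mp (C.support_eq_cons ▸ hzC) with h | h
      · exact h ▸ end_mem_tail_support hCnil
      · exact h
    exact main_lemma G D hD hlongest' succ hsucc' x hx' z hy hz hz' hyz P hP
      (fun w hw hwD => hPint w hw (hDsubC w hwD))
  refine ⟨hmain, fun hadj => hmain ⟨Walk.cons hadj Walk.nil, ?_, by simp⟩⟩
  simp [Walk.isPath_def, hadj.ne]
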